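/- Let A be a complex Banach *-algebra with identity and a ∈ A generalized Drazin invertible. Suppose x ∈ A satisfies x a x = x, (ax)* = ax, (xa - 1) a^d = 0, and x ∈ a^d A (i.e., x = a^d z for some z ∈ A). Then x A = a^d A and x* A = a^d A. -/
import Mathlib


open Filter Topology

variable {A : Type*} [NormedRing A] [StarRing A] [NormedAlgebra ℂ A] [StarModule ℂ A]
  [CompleteSpace A]

/-- quasinilpotent: `lim ‖z^n‖^(1/n) = 0` -/
def IsQNil (z : A) : Prop :=
  Tendsto (fun n : ℕ => ‖z ^ n‖ ^ ((1 : ℝ) / n)) atTop (𝓝 0)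

/-- generalized Drazin inverse -/
def IsGD (a x : A) : Prop :=
  a * x ^ 2 = x ∧ a * x = x * a ∧ IsQNil (a - a ^ 2 * x)

/-- generalized core-EP inverse -/
def IsGCEP (a x : A) : Prop :=
  x = a * x ^ 2 ∧ star (a * x) = a * x ∧
    Tendsto (fun n : ℕ => ‖a ^ n - x * a ^ (n + 1)‖ ^ ((1 : ℝ) / n)) atTop (𝓝 0)

theorem stmt14 (a ad x : A) (had : IsGD a ad)
    (h1 : x * a * x = x) (h2 : star (a * x) = a * x)
    (h3 : (x * a - 1) * ad = 0) (h4 : ∃ z : A, x = ad * z) :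
    (∀ w : A, (∃ u, w = x * u) ↔ (∃ u, w = ad * u)) ∧
      (∀ w : A, (∃ u, w = star x * u) ↔ (∃ u, w = ad * u)) := by
  obtain ⟨had1, had2, -⟩ := had
  obtain ⟨z, hz⟩ := h4
  -- x * a * ad = ad
  have hxaad : x * a * ad = ad := by
    have h := h3
    rw [sub_mul, one_mul, sub_eq_zero] at h
    exact h
  -- ad * a * ad = ad
  have hadaad : ad * a * ad = ad := by
    have : a * ad * ad = ad := by
      rw [mul_assoc, ← sq, had1]
    calc ad * a * ad = a * ad * ad := by rw [had2]
      _ = ad := this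
  -- (a*x)*(a*ad) = a*ad
  have hpq : a * x * (a * ad) = a * ad := by
    calc a * x * (a * ad) = a * (x * a * ad) := by noncomm_ring
      _ = a * ad := by rw [hxaad]
  -- (a*ad)*(a*x) = a*x
  have hqp : a * ad * (a * x) = a * x := by
    rw [hz]
    calc a * ad * (a * (ad * z)) = a * (ad * a * ad) * z := by noncomm_ring
      _ = a * (ad * z) := by rw [hadaad]; noncomm_ring
  -- ad = a * ad * ad
  have hq_ad : a * ad * ad = ad := by rw [mul_assoc, ← sq, had1]
  -- ad = (a*x) * ad
  have hp_ad : a * x * ad = ad := by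
    calc a * x * ad = a * x * (a * ad * ad) := by rw [hq_ad]
      _ = (a * x * (a * ad)) * ad := by noncomm_ring
      _ = a * ad * ad := by rw [hpq]
      _ = ad := hq_ad
  -- star x = (a*x) * star x
  have hx_p : star x = a * x * star x := by
    conv_lhs => rw [← h1]
    rw [star_mul, star_mul, ← mul_assoc, ← star_mul, h2]
  constructor
  · intro w
    constructor
    · rintro ⟨u, rfl⟩
      exact ⟨z * u, by rw [hz, mul_assoc]⟩
    · rintro ⟨u, rfl⟩
      refine ⟨a * ad * u, ?_⟩
      calc ad * u = x * a * ad * u := by rw [hxaad]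
        _ = x * (a * ad * u) := by noncomm_ring
  · intro w
    constructor
    · rintro ⟨u, rfl⟩
      refine ⟨a * (a * x * star x) * u, ?_⟩
      calc star x * u = a * x * star x * u := by rw [← hx_p]
        _ = (a * ad * (a * x)) * star x * u := by rw [hqp]
        _ = (a * ad) * (a * x * star x) * u := by noncomm_ring
        _ = (ad * a) * (a * x * star x) * u := by rw [had2]
        _ = ad * (a * (a * x * star x) * u) := by noncomm_ring
    · rintro ⟨u, rfl⟩
      refine ⟨star a * ad * u, ?_⟩
      calc ad * u = a * x * ad * u := by rw [hp_ad]
        _ = (star (a * x)) * ad * u := by rw [h2]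
        _ = star x * star a * ad * u := by rw [star_mul]
        _ = star x * (star a * ad * u) := by noncomm_ring
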